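/- Let a, b, c, d be positive integers with a + b = c + d = n. The meander graph M(a, b | c, d) consists of a single path if and only if gcd(a − c, n) = 1. -/

import Mathlib

/-- Two (1-based) positions `u v` are joined by an arc determined by the
composition `L`: they lie in a common block of `L` and are reflections of each
other across the middle of that block. -/
def blockAdj (L : List ℕ) (u v : ℕ) : Prop :=
  ∃ k < L.length,
    (L.take k).sum < u ∧ u ≤ (L.take (k + 1)).sum ∧
    (L.take k).sum < v ∧ v ≤ (L.take (k + 1)).sum ∧
    u + v = (L.take k).sum + (L.take (k + 1)).sum + 1 ∧ u ≠ v

/-- The meander graph `M(x | y)` on vertices `{1, …, n}` (represented by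
`Fin n`, vertex `i` corresponding to the number `i + 1`): top edges come from
the blocks of `x`, bottom edges from the blocks of `y`. -/
def meander (x y : List ℕ) (n : ℕ) : SimpleGraph (Fin n) where
  Adj i j := blockAdj x ((i : ℕ) + 1) ((j : ℕ) + 1) ∨ blockAdj y ((i : ℕ) + 1) ((j : ℕ) + 1)
  symm := by
    constructor
    rintro i j (⟨k, hk, h1, h2, h3, h4, h5, h6⟩ | ⟨k, hk, h1, h2, h3, h4, h5, h6⟩)
    · exact Or.inl ⟨k, hk, h3, h4, h1, h2, by omega, by omega⟩
    · exact Or.inr ⟨k, hk, h3, h4, h1, h2, by omega, by omega⟩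
  loopless := by
    constructor
    rintro i (⟨k, hk, h1, h2, h3, h4, h5, h6⟩ | ⟨k, hk, h1, h2, h3, h4, h5, h6⟩) <;> omega

lemma meander_adj_nat {a b c d n : ℕ} (hab : a + b = n) (hcd : c + d = n) {i j : Fin n} :
    (meander [a, b] [c, d] n).Adj i j ↔
      (((i : ℕ) + j + 2 = a + 1 ∨ (i : ℕ) + j + 2 = a + 1 + n ∨
        (i : ℕ) + j + 2 = c + 1 ∨ (i : ℕ) + j + 2 = c + 1 + n) ∧ (i : ℕ) ≠ (j : ℕ)) := by
  have hi := i.isLt; have hj := j.isLt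
  constructor
  · rintro (⟨k, hk, h⟩ | ⟨k, hk, h⟩) <;>
    · simp only [List.length_cons, List.length_nil] at hk
      interval_cases k <;>
        simp only [List.take_zero, List.take_succ_cons, List.take_nil, List.sum_cons,
          List.sum_nil] at h <;> omega
  · rintro ⟨h, hne⟩
    have t0 : (List.take 0 [a, b]).sum = 0 := rfl
    have t1 : (List.take 1 [a, b]).sum = a := by simp
    have t2 : (List.take 2 [a, b]).sum = a + b := by simp
    have s0 : (List.take 0 [c, d]).sum = 0 := rfl
    have s1 : (List.take 1 [c, d]).sum = c := by simp
    have s2 : (List.take 2 [c, d]).sum = c + d := by simp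
    rcases h with h | h | h | h
    · exact Or.inl ⟨0, by norm_num, by rw [t0, t1]; omega⟩
    · exact Or.inl ⟨1, by norm_num, by rw [t1, t2]; omega⟩
    · exact Or.inr ⟨0, by norm_num, by rw [s0, s1]; omega⟩
    · exact Or.inr ⟨1, by norm_num, by rw [s1, s2]; omega⟩

private lemma modeq_two_cases {x y n : ℕ} (hn : 0 < n) (hx1 : 2 ≤ x) (hx2 : x ≤ 2 * n)
    (hy1 : 2 ≤ y) (hy2 : y ≤ n) (h : x ≡ y [MOD n]) : x = y ∨ x = y + n := by
  obtain ⟨t, ht⟩ := h.dvd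
  -- ht : (y : ℤ) - x = n * t
  have hn' : (0 : ℤ) < n := by exact_mod_cast hn
  have hx2' : (x : ℤ) ≤ 2 * n := by exact_mod_cast hx2
  have hy2' : (y : ℤ) ≤ n := by exact_mod_cast hy2
  have hx1' : (2 : ℤ) ≤ x := by exact_mod_cast hx1
  have hy1' : (2 : ℤ) ≤ y := by exact_mod_cast hy1
  have h1 : t < 1 := by
    have : (n : ℤ) * t < n * 1 := by nlinarith
    exact lt_of_mul_lt_mul_left this (by omega)
  have h2 : (-2 : ℤ) < t := by
    have : (n : ℤ) * (-2) < n * t := by nlinarith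
    exact lt_of_mul_lt_mul_left this (by omega)
  interval_cases t <;> omega

private lemma zmod_sum_iff {n x y : ℕ} (hn : 0 < n) (hx1 : 2 ≤ x) (hx2 : x ≤ 2 * n)
    (hy1 : 2 ≤ y) (hy2 : y ≤ n) :
    ((x : ZMod n) = (y : ZMod n)) ↔ (x = y ∨ x = y + n) := by
  rw [ZMod.natCast_eq_natCast_iff]
  constructor
  · exact modeq_two_cases hn hx1 hx2 hy1 hy2
  · rintro (rfl | rfl)
    · rfl
    · exact (Nat.add_mod_right y n : (y + n) % n = y % n)

private lemma isUnit_intCast_iff {n : ℕ} (hn : 0 < n) (k : ℤ) :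
    IsUnit ((k : ZMod n)) ↔ Int.gcd k n = 1 := by
  haveI : NeZero n := ⟨hn.ne'⟩
  constructor
  · rintro ⟨u, hu⟩
    rw [← Int.isCoprime_iff_gcd_eq_one]
    set w : ℕ := ((u⁻¹ : (ZMod n)ˣ) : ZMod n).val with hwdef
    have hw : ((w : ℕ) : ZMod n) = ((u⁻¹ : (ZMod n)ˣ) : ZMod n) :=
      ZMod.natCast_rightInverse _
    have h1 : ((k * w - 1 : ℤ) : ZMod n) = 0 := by
      push_cast
      rw [hw, ← hu]
      simp
    obtain ⟨t, ht⟩ := (ZMod.intCast_zmod_eq_zero_iff_dvd _ n).1 h1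
    exact ⟨w, -t, by linear_combination ht⟩
  · intro hg
    obtain ⟨u, v, huv⟩ := Int.isCoprime_iff_gcd_eq_one.mpr hg
    apply IsUnit.of_mul_eq_one ((u : ZMod n))
    have h2 := congrArg (fun z : ℤ => ((z : ZMod n))) huv
    push_cast at h2
    rw [ZMod.natCast_self] at h2
    linear_combination h2

private def mseq {n : ℕ} (s D C : ZMod n) (k : ℕ) : ZMod n :=
  if k % 2 = 0 then s + ((k / 2 : ℕ) : ZMod n) * D else C - s - ((k / 2 : ℕ) : ZMod n) * D

private lemma mseq_even {n : ℕ} (s D C : ZMod n) {k : ℕ} (h : k % 2 = 0) :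
    mseq s D C k = s + ((k / 2 : ℕ) : ZMod n) * D := if_pos h

private lemma mseq_odd {n : ℕ} (s D C : ZMod n) {k : ℕ} (h : k % 2 = 1) :
    mseq s D C k = C - s - ((k / 2 : ℕ) : ZMod n) * D := if_neg (by omega)

section
variable {n : ℕ} {s D C A : ZMod n}

private lemma mseq_cancel (hu : IsUnit D) {m m' : ℕ} (hm : m < n) (hm' : m' < n)
    (h : (m : ZMod n) * D = (m' : ZMod n) * D) : m = m' := by
  have h2 := hu.mul_right_cancel h
  have h3 := (ZMod.natCast_eq_natCast_iff _ _ _).1 h2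
  rwa [Nat.ModEq, Nat.mod_eq_of_lt hm, Nat.mod_eq_of_lt hm'] at h3

private lemma mseq_zero (hu : IsUnit D) {m : ℕ} (h : (m : ZMod n) * D = 0) : n ∣ m :=
  (ZMod.natCast_eq_zero_iff m n).1 ((hu.mul_left_eq_zero).1 h)

private lemma mseq_inj (hu : IsUnit D) (hs : s + s = A) (hAC : A = C + D)
    {k l : ℕ} (hk : k < n) (hl : l < n) (h : mseq s D C k = mseq s D C l) : k = l := by
  rcases Nat.mod_two_eq_zero_or_one k with hk2 | hk2 <;>
    rcases Nat.mod_two_eq_zero_or_one l with hl2 | hl2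
  · rw [mseq_even _ _ _ hk2, mseq_even _ _ _ hl2] at h
    have h4 : ((k / 2 : ℕ) : ZMod n) * D = ((l / 2 : ℕ) : ZMod n) * D := by linear_combination h
    have := mseq_cancel hu (by omega) (by omega) h4; omega
  · rw [mseq_even _ _ _ hk2, mseq_odd _ _ _ hl2] at h
    have hz : (((k / 2 + l / 2 + 1 : ℕ)) : ZMod n) * D = 0 := by
      push_cast; linear_combination h - hs - hAC
    exact absurd (mseq_zero hu hz) (Nat.not_dvd_of_pos_of_lt (by omega) (by omega))
  · rw [mseq_odd _ _ _ hk2, mseq_even _ _ _ hl2] at h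
    have hz : (((k / 2 + l / 2 + 1 : ℕ)) : ZMod n) * D = 0 := by
      push_cast; linear_combination - h - hs - hAC
    exact absurd (mseq_zero hu hz) (Nat.not_dvd_of_pos_of_lt (by omega) (by omega))
  · rw [mseq_odd _ _ _ hk2, mseq_odd _ _ _ hl2] at h
    have h4 : ((k / 2 : ℕ) : ZMod n) * D = ((l / 2 : ℕ) : ZMod n) * D := by linear_combination - h
    have := mseq_cancel hu (by omega) (by omega) h4; omega

private lemma mseq_consec (hAC : A = C + D) (k : ℕ) :
    mseq s D C k + mseq s D C (k + 1) = C ∨ mseq s D C k + mseq s D C (k + 1) = A := by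
  rcases Nat.mod_two_eq_zero_or_one k with hk2 | hk2
  · left
    rw [mseq_even _ _ _ hk2, mseq_odd _ _ _ (by omega), show (k + 1) / 2 = k / 2 by omega]
    ring
  · right
    rw [mseq_odd _ _ _ hk2, mseq_even _ _ _ (by omega), show (k + 1) / 2 = k / 2 + 1 by omega]
    push_cast
    linear_combination - hAC

private lemma mseq_adj (hu : IsUnit D) (hs : s + s = A) (hAC : A = C + D)
    {k l : ℕ} (hk : k < n) (hl : l < n) (hne : mseq s D C k ≠ mseq s D C l)
    (h : mseq s D C k + mseq s D C l = A ∨ mseq s D C k + mseq s D C l = C) :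
    k = l + 1 ∨ l = k + 1 := by
  rcases h with h | h <;>
    rcases Nat.mod_two_eq_zero_or_one k with hk2 | hk2 <;>
      rcases Nat.mod_two_eq_zero_or_one l with hl2 | hl2
  · -- sum = A, even, even
    rw [mseq_even _ _ _ hk2, mseq_even _ _ _ hl2] at h
    have hz : (((k / 2 + l / 2 : ℕ)) : ZMod n) * D = 0 := by
      push_cast; linear_combination h - hs
    have h0 := Nat.eq_zero_of_dvd_of_lt (mseq_zero hu hz) (by omega)
    exact absurd (congrArg (mseq s D C) (show k = l by omega)) hne
  · -- sum = A, even, odd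
    rw [mseq_even _ _ _ hk2, mseq_odd _ _ _ hl2] at h
    have h4 : ((k / 2 : ℕ) : ZMod n) * D = (((l / 2 + 1 : ℕ)) : ZMod n) * D := by
      push_cast; linear_combination h + hAC
    have := mseq_cancel hu (by omega) (by omega) h4
    left; omega
  · -- sum = A, odd, even
    rw [mseq_odd _ _ _ hk2, mseq_even _ _ _ hl2] at h
    have h4 : ((l / 2 : ℕ) : ZMod n) * D = (((k / 2 + 1 : ℕ)) : ZMod n) * D := by
      push_cast; linear_combination h + hAC
    have := mseq_cancel hu (by omega) (by omega) h4
    right; omega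
  · -- sum = A, odd, odd
    rw [mseq_odd _ _ _ hk2, mseq_odd _ _ _ hl2] at h
    have hz : (((k / 2 + l / 2 + 2 : ℕ)) : ZMod n) * D = 0 := by
      push_cast; linear_combination - h - hs - 2 * hAC
    have hle := Nat.le_of_dvd (by omega) (mseq_zero hu hz)
    exact absurd (congrArg (mseq s D C) (show k = l by omega)) hne
  · -- sum = C, even, even
    rw [mseq_even _ _ _ hk2, mseq_even _ _ _ hl2] at h
    have hz : (((k / 2 + l / 2 + 1 : ℕ)) : ZMod n) * D = 0 := by
      push_cast; linear_combination h - hs - hAC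
    have hle := Nat.le_of_dvd (by omega) (mseq_zero hu hz)
    exact absurd (congrArg (mseq s D C) (show k = l by omega)) hne
  · -- sum = C, even, odd
    rw [mseq_even _ _ _ hk2, mseq_odd _ _ _ hl2] at h
    have h4 : ((k / 2 : ℕ) : ZMod n) * D = ((l / 2 : ℕ) : ZMod n) * D := by
      linear_combination h
    have := mseq_cancel hu (by omega) (by omega) h4
    right; omega
  · -- sum = C, odd, even
    rw [mseq_odd _ _ _ hk2, mseq_even _ _ _ hl2] at h
    have h4 : ((k / 2 : ℕ) : ZMod n) * D = ((l / 2 : ℕ) : ZMod n) * D := by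
      linear_combination - h
    have := mseq_cancel hu (by omega) (by omega) h4
    left; omega
  · -- sum = C, odd, odd
    rw [mseq_odd _ _ _ hk2, mseq_odd _ _ _ hl2] at h
    have hz : (((k / 2 + l / 2 + 1 : ℕ)) : ZMod n) * D = 0 := by
      push_cast; linear_combination - h - hs - hAC
    exact absurd (mseq_zero hu hz) (Nat.not_dvd_of_pos_of_lt (by omega) (by omega))

end


/-- A graph on `Fin n` consists of a single path when it is isomorphic to the
path graph on `n` vertices. -/
def IsSinglePath {n : ℕ} (G : SimpleGraph (Fin n)) : Prop :=
  Nonempty (G ≃g SimpleGraph.pathGraph n)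

private lemma forward_aux {a b c d n : ℕ} (ha : 0 < a) (hb : 0 < b) (hc : 0 < c) (hd : 0 < d)
    (hab : a + b = n) (hcd : c + d = n)
    (hgcd : Int.gcd ((a : ℤ) - (c : ℤ)) (n : ℤ) = 1) (hpar : Odd n ∨ Odd a) :
    IsSinglePath (meander [a, b] [c, d] n) := by
  have hn : 0 < n := by omega
  have hn2 : 2 ≤ n := by omega
  haveI : NeZero n := ⟨hn.ne'⟩
  set A : ZMod n := ((a + 1 : ℕ) : ZMod n) with hA
  set C : ZMod n := ((c + 1 : ℕ) : ZMod n) with hC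
  set D : ZMod n := A - C with hD
  have hAC : A = C + D := by rw [hD]; ring
  have hu : IsUnit D := by
    have h1 : (((a : ℤ) - (c : ℤ) : ℤ) : ZMod n) = D := by
      rw [hD, hA, hC]; push_cast; ring
    rw [← h1]
    exact (isUnit_intCast_iff hn _).mpr hgcd
  obtain ⟨s, hs⟩ : ∃ s : ZMod n, s + s = A := by
    rcases hpar with ⟨m, hm⟩ | ⟨m, hm⟩
    · refine ⟨(((m + 1) * (a + 1) : ℕ) : ZMod n), ?_⟩
      have h2 : (m + 1) * (a + 1) + (m + 1) * (a + 1) = n * (a + 1) + (a + 1) := by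
        subst hm; ring
      rw [hA, ← Nat.cast_add, h2]
      push_cast [ZMod.natCast_self]
      ring
    · refine ⟨((m + 1 : ℕ) : ZMod n), ?_⟩
      have h2 : (m + 1) + (m + 1) = a + 1 := by omega
      rw [hA, ← Nat.cast_add, h2]
  -- the path enumeration
  set f : Fin n → Fin n := fun k => ⟨(mseq s D C (k : ℕ) - 1).val, ZMod.val_lt _⟩ with hf
  have hF : ∀ k : Fin n, (((f k : ℕ) + 1 : ℕ) : ZMod n) = mseq s D C (k : ℕ) := by
    intro k
    show ((((mseq s D C (k : ℕ) - 1).val : ℕ) + 1 : ℕ) : ZMod n) = _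
    push_cast [ZMod.natCast_val, ZMod.cast_id]
    ring
  have hmne : ∀ k l : Fin n, k ≠ l → mseq s D C (k : ℕ) ≠ mseq s D C (l : ℕ) := by
    intro k l hkl h
    exact hkl (Fin.ext (mseq_inj hu hs hAC k.isLt l.isLt h))
  have hfinj : Function.Injective f := by
    intro k l h
    apply Fin.ext
    apply mseq_inj hu hs hAC k.isLt l.isLt
    rw [← hF k, ← hF l]
    have : (f k : ℕ) = (f l : ℕ) := by rw [h]
    rw [this]
  have hfmne : ∀ k l : Fin n, k ≠ l → (f k : ℕ) ≠ (f l : ℕ) := by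
    intro k l hkl h
    exact hkl (hfinj (Fin.ext h))
  set e : Fin n ≃ Fin n := Equiv.ofBijective f (Finite.injective_iff_bijective.mp hfinj) with he
  have hek : ∀ k : Fin n, e k = f k := fun k => rfl
  refine ⟨RelIso.symm ⟨e, ?_⟩⟩
  intro k l
  rw [hek, hek, SimpleGraph.pathGraph_adj, meander_adj_nat hab hcd]
  have hsum : ((((f k : ℕ) + (f l : ℕ) + 2 : ℕ)) : ZMod n) =
      mseq s D C (k : ℕ) + mseq s D C (l : ℕ) := by
    rw [← hF k, ← hF l]; push_cast; ring
  have hiffA : (((f k : ℕ) + (f l : ℕ) + 2 = a + 1 ∨ (f k : ℕ) + (f l : ℕ) + 2 = a + 1 + n)) ↔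
      mseq s D C (k : ℕ) + mseq s D C (l : ℕ) = A := by
    rw [← hsum, hA]
    exact (zmod_sum_iff hn (by omega) (by omega) (by omega) (by omega)).symm
  have hiffC : (((f k : ℕ) + (f l : ℕ) + 2 = c + 1 ∨ (f k : ℕ) + (f l : ℕ) + 2 = c + 1 + n)) ↔
      mseq s D C (k : ℕ) + mseq s D C (l : ℕ) = C := by
    rw [← hsum, hC]
    exact (zmod_sum_iff hn (by omega) (by omega) (by omega) (by omega)).symm
  constructor
  · rintro ⟨hor, hne⟩
    have hne2 : mseq s D C (k : ℕ) ≠ mseq s D C (l : ℕ) := by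
      intro h
      exact hne (by rw [hf]; simp [h])
    have hAorC : mseq s D C (k : ℕ) + mseq s D C (l : ℕ) = A ∨
        mseq s D C (k : ℕ) + mseq s D C (l : ℕ) = C := by
      rcases hor with h | h | h | h
      · exact Or.inl (hiffA.mp (Or.inl h))
      · exact Or.inl (hiffA.mp (Or.inr h))
      · exact Or.inr (hiffC.mp (Or.inl h))
      · exact Or.inr (hiffC.mp (Or.inr h))
    rcases mseq_adj hu hs hAC k.isLt l.isLt hne2 hAorC with h | h
    · exact Or.inr h.symm
    · exact Or.inl h.symm
  · intro hor
    have hklne : k ≠ l := by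
      intro h; rw [h] at hor; omega
    refine ⟨?_, hfmne k l hklne⟩
    rcases hor with h | h
    · -- (k:ℕ) + 1 = l
      have := mseq_consec (s := s) hAC (k : ℕ)
      rw [show (k : ℕ) + 1 = (l : ℕ) from h] at this
      rcases this with h2 | h2
      · rcases hiffC.mpr h2 with h3 | h3
        · exact Or.inr (Or.inr (Or.inl h3))
        · exact Or.inr (Or.inr (Or.inr h3))
      · rcases hiffA.mpr h2 with h3 | h3
        · exact Or.inl h3
        · exact Or.inr (Or.inl h3)
    · -- (l:ℕ) + 1 = k
      have := mseq_consec (s := s) hAC (l : ℕ)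
      rw [show (l : ℕ) + 1 = (k : ℕ) from h] at this
      rw [add_comm (mseq s D C (l : ℕ))] at this
      rcases this with h2 | h2
      · rcases hiffC.mpr h2 with h3 | h3
        · exact Or.inr (Or.inr (Or.inl h3))
        · exact Or.inr (Or.inr (Or.inr h3))
      · rcases hiffA.mpr h2 with h3 | h3
        · exact Or.inl h3
        · exact Or.inr (Or.inl h3)

private lemma walk_inv {a b c d n m : ℕ} (hab : a + b = n) (hcd : c + d = n)
    (hmn : ((n : ℕ) : ZMod m) = 0) (hmca : ((c + 1 : ℕ) : ZMod m) = ((a + 1 : ℕ) : ZMod m))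
    {v w : Fin n} (p : (meander [a, b] [c, d] n).Walk v w) :
    (((w : ℕ) + 1 : ℕ) : ZMod m) = (((v : ℕ) + 1 : ℕ) : ZMod m) ∨
      (((w : ℕ) + 1 : ℕ) : ZMod m) + (((v : ℕ) + 1 : ℕ) : ZMod m) = ((a + 1 : ℕ) : ZMod m) := by
  have hedge : ∀ u x : Fin n, (meander [a, b] [c, d] n).Adj u x →
      (((u : ℕ) + 1 : ℕ) : ZMod m) + (((x : ℕ) + 1 : ℕ) : ZMod m) = ((a + 1 : ℕ) : ZMod m) := by
    intro u x hadj
    obtain ⟨h4, -⟩ := (meander_adj_nat hab hcd).mp hadj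
    have hc2 : (((u : ℕ) + 1 : ℕ) : ZMod m) + (((x : ℕ) + 1 : ℕ) : ZMod m)
        = (((u : ℕ) + (x : ℕ) + 2 : ℕ) : ZMod m) := by push_cast; ring
    rw [hc2]
    rcases h4 with h | h | h | h <;> rw [h]
    · push_cast
      rw [hmn]; ring
    · exact hmca
    · have h5 := hmca
      push_cast at h5 ⊢
      rw [hmn]
      linear_combination h5
  induction p with
  | nil => exact Or.inl rfl
  | cons h p ih =>
    rcases ih with h1 | h1
    · right
      have h2 := hedge _ _ h
      linear_combination h1 + h2
    · left
      have h2 := hedge _ _ h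
      linear_combination h1 - h2

private lemma psi_surj {n m : ℕ} [NeZero m] (hn : 0 < n) (hmn : m ∣ n) (z : ZMod m) :
    ∃ v : Fin n, (((v : ℕ) + 1 : ℕ) : ZMod m) = z := by
  refine ⟨⟨(z - 1).val, lt_of_lt_of_le (ZMod.val_lt _) (Nat.le_of_dvd hn hmn)⟩, ?_⟩
  show (((z - 1).val + 1 : ℕ) : ZMod m) = z
  push_cast [ZMod.natCast_val, ZMod.cast_id]
  ring

private lemma natcast_zmod_inj {g x y : ℕ} (hx : x < g) (hy : y < g)
    (h : (x : ZMod g) = (y : ZMod g)) : x = y := by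
  have h3 := (ZMod.natCast_eq_natCast_iff _ _ _).1 h
  rwa [Nat.ModEq, Nat.mod_eq_of_lt hx, Nat.mod_eq_of_lt hy] at h3

private lemma exists_partner {a b n : ℕ} (ha : 0 < a) (hb : 0 < b) (hab : a + b = n)
    (v : Fin n) (hno1 : 2 * ((v : ℕ) + 1) ≠ a + 1) (hno2 : 2 * ((v : ℕ) + 1) ≠ a + 1 + n) :
    ∃ w : Fin n, ((v : ℕ) + (w : ℕ) + 2 = a + 1 ∨ (v : ℕ) + (w : ℕ) + 2 = a + 1 + n) ∧
      (v : ℕ) ≠ (w : ℕ) := by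
  have hv := v.isLt
  rcases le_or_gt ((v : ℕ) + 1) a with hle | hlt
  · refine ⟨⟨a - 1 - (v : ℕ), by omega⟩, ?_, ?_⟩ <;> simp only [Fin.val_mk] <;> omega
  · refine ⟨⟨a + n - 1 - (v : ℕ), by omega⟩, ?_, ?_⟩ <;> simp only [Fin.val_mk] <;> omega


/-- For positive integers `a`, `b`, `c`, `d` with
`a + b = c + d = n`, the meander graph `M(a, b | c, d)` consists of a single
path if and only if `gcd(a - c, n) = 1`. -/
theorem meander_opposite_maximal_parabolic_isSinglePath_iff
    (a b c d n : ℕ) (ha : 0 < a) (hb : 0 < b) (hc : 0 < c) (hd : 0 < d)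
    (hab : a + b = n) (hcd : c + d = n) :
    IsSinglePath (meander [a, b] [c, d] n) ↔ Int.gcd ((a : ℤ) - (c : ℤ)) (n : ℤ) = 1 := by
  have hn : 0 < n := by omega
  constructor
  · rintro ⟨iso⟩
    by_contra hg1
    set g := Int.gcd ((a : ℤ) - (c : ℤ)) (n : ℤ) with hgdef
    have hgdvdn : g ∣ n := by
      have h1 : (↑g : ℤ) ∣ (n : ℤ) := Int.gcd_dvd_right _ _
      exact_mod_cast h1
    have hgdvdac : (↑g : ℤ) ∣ ((a : ℤ) - c) := Int.gcd_dvd_left _ _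
    have hgpos : 0 < g := by
      rcases Nat.eq_zero_or_pos g with h | h
      · obtain ⟨-, h2⟩ := Int.gcd_eq_zero_iff.mp h
        omega
      · exact h
    have hpc : (SimpleGraph.pathGraph n).Connected := by
      have h2 : n = (n - 1) + 1 := by omega
      rw [h2]
      exact SimpleGraph.pathGraph_connected _
    have hconn : (meander [a, b] [c, d] n).Connected := iso.connected_iff.mpr hpc
    have hpre := hconn.preconnected
    haveI : NeZero g := ⟨by omega⟩
    have hgn0 : ((n : ℕ) : ZMod g) = 0 := (ZMod.natCast_eq_zero_iff _ _).mpr hgdvdn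
    have hCA : ((c + 1 : ℕ) : ZMod g) = ((a + 1 : ℕ) : ZMod g) := by
      have h0 : (((a : ℤ) - c : ℤ) : ZMod g) = 0 :=
        (ZMod.intCast_zmod_eq_zero_iff_dvd _ _).mpr hgdvdac
      push_cast at h0 ⊢
      linear_combination -h0
    rcases (by omega : g = 2 ∨ 3 ≤ g) with hg2 | hg3
    · -- g = 2
      have h2n : 2 ∣ n := by rw [← hg2]; exact hgdvdn
      have h2ac : a % 2 = c % 2 := by
        have h9 : (2 : ℤ) ∣ (a : ℤ) - c := by
          have := hgdvdac; rw [hg2] at this; exact_mod_cast this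
        omega
      rcases Nat.even_or_odd a with hae | hao
      · -- a even, c even : degree-two argument
        have ha2 : a % 2 = 0 := by rcases hae with ⟨m, hm⟩; omega
        have hc2 : c % 2 = 0 := by omega
        have hn2 : n % 2 = 0 := by omega
        have hac : a ≠ c := by
          intro h
          rw [h, sub_self, Int.gcd_zero_left, Int.natAbs_natCast] at hgdef
          omega
        set p0 : Fin n := ⟨0, hn⟩ with hp0
        set vv : Fin n := iso.symm p0 with hvv
        have hvvlt := vv.isLt
        obtain ⟨w1, hw1, hw1ne⟩ := exists_partner ha hb hab vv (by omega) (by omega)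
        obtain ⟨w2, hw2, hw2ne⟩ := exists_partner hc hd hcd vv (by omega) (by omega)
        have hadj1 : (meander [a, b] [c, d] n).Adj vv w1 := by
          rw [meander_adj_nat hab hcd]
          exact ⟨by tauto, hw1ne⟩
        have hadj2 : (meander [a, b] [c, d] n).Adj vv w2 := by
          rw [meander_adj_nat hab hcd]
          exact ⟨by tauto, hw2ne⟩
        have hw12 : w1 ≠ w2 := by
          intro h
          rw [h] at hw1
          omega
        have hiso1 := iso.map_rel_iff.mpr hadj1
        have hiso2 := iso.map_rel_iff.mpr hadj2
        have hivv : iso vv = p0 := by rw [hvv]; exact iso.apply_symm_apply p0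
        rw [hivv, SimpleGraph.pathGraph_adj] at hiso1 hiso2
        have hval0 : (p0 : ℕ) = 0 := rfl
        have h1 : ((iso w1 : Fin n) : ℕ) = 1 := by omega
        have h2 : ((iso w2 : Fin n) : ℕ) = 1 := by omega
        exact hw12 (iso.injective (Fin.ext (h1.trans h2.symm)))
      · -- a odd, c odd : parity invariant
        have ha2 : a % 2 = 1 := by rcases hao with ⟨m, hm⟩; omega
        have hA0 : ((a + 1 : ℕ) : ZMod 2) = 0 :=
          (ZMod.natCast_eq_zero_iff _ _).mpr (by omega)
        have h2n0 : ((n : ℕ) : ZMod 2) = 0 := (ZMod.natCast_eq_zero_iff _ _).mpr h2n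
        have h2CA : ((c + 1 : ℕ) : ZMod 2) = ((a + 1 : ℕ) : ZMod 2) := by
          have hC0 : ((c + 1 : ℕ) : ZMod 2) = 0 :=
            (ZMod.natCast_eq_zero_iff _ _).mpr (by omega)
          rw [hC0, hA0]
        set v0 : Fin n := ⟨0, hn⟩ with hv0
        have hall : ∀ w : Fin n, (((w : ℕ) + 1 : ℕ) : ZMod 2) = (((v0 : ℕ) + 1 : ℕ) : ZMod 2) := by
          intro w
          obtain ⟨p⟩ := hpre v0 w
          rcases walk_inv hab hcd h2n0 h2CA p with h1 | h1
          · exact h1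
          · rw [hA0] at h1
            have hneg : ∀ x y : ZMod 2, x + y = 0 → x = y := by decide
            exact hneg _ _ h1
        obtain ⟨v, hv⟩ := psi_surj (m := 2) hn h2n ((((v0 : ℕ) + 1 : ℕ) : ZMod 2) + 1)
        have h3 := hall v
        rw [hv] at h3
        have h4 : (1 : ZMod 2) = 0 := by linear_combination h3
        exact absurd h4 (by decide)
    · -- g ≥ 3
      obtain ⟨v0, hv0⟩ := psi_surj (m := g) hn hgdvdn ((0 : ℕ) : ZMod g)
      obtain ⟨v1, hv1⟩ := psi_surj (m := g) hn hgdvdn ((1 : ℕ) : ZMod g)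
      obtain ⟨v2, hv2⟩ := psi_surj (m := g) hn hgdvdn ((2 : ℕ) : ZMod g)
      have hall : ∀ w : Fin n, (((w : ℕ) + 1 : ℕ) : ZMod g) = ((0 : ℕ) : ZMod g) ∨
          (((w : ℕ) + 1 : ℕ) : ZMod g) + ((0 : ℕ) : ZMod g) = ((a + 1 : ℕ) : ZMod g) := by
        intro w
        obtain ⟨p⟩ := hpre v0 w
        have h5 := walk_inv hab hcd hgn0 hCA p
        rw [hv0] at h5
        exact h5
      have h1 := hall v1; rw [hv1] at h1
      have h2 := hall v2; rw [hv2] at h2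
      rcases h1 with h1 | h1
      · exact absurd (natcast_zmod_inj (by omega) (by omega) h1) (by omega)
      rcases h2 with h2 | h2
      · exact absurd (natcast_zmod_inj (by omega) (by omega) h2) (by omega)
      have h3 : ((1 : ℕ) : ZMod g) = ((2 : ℕ) : ZMod g) := by linear_combination h1 - h2
      exact absurd (natcast_zmod_inj (by omega) (by omega) h3) (by omega)
  · intro hgcd
    rcases Nat.even_or_odd n with hne | hno
    · rcases Nat.even_or_odd a with hae | hao
      · -- a even ⇒ c must be odd
        have hco : Odd c := by
          by_contra hc0
          rw [Nat.not_odd_iff_even] at hc0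
          have h1 : Even ((a : ℤ) - c) := by
            rcases hae with ⟨m, hm⟩; rcases hc0 with ⟨m', hm'⟩
            exact ⟨(m : ℤ) - m', by omega⟩
          have h2 : Even ((n : ℕ) : ℤ) := by
            rcases hne with ⟨m, hm⟩; exact ⟨(m : ℤ), by omega⟩
          obtain ⟨u, v, huv⟩ := Int.isCoprime_iff_gcd_eq_one.mpr hgcd
          have hev : Even (u * ((a : ℤ) - c) + v * n) :=
            Even.add (h1.mul_left u) (h2.mul_left v)
          rw [huv] at hev
          rcases hev with ⟨t, ht⟩
          omega
        have hswapgcd : Int.gcd ((c : ℤ) - (a : ℤ)) (n : ℤ) = 1 := by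
          rw [show ((c : ℤ) - a) = -((a : ℤ) - c) by ring, Int.gcd_def, Int.natAbs_neg,
            ← Int.gcd_def]
          exact hgcd
        have h := forward_aux hc hd ha hb hcd hab hswapgcd (Or.inr hco)
        have hswap : meander [a, b] [c, d] n = meander [c, d] [a, b] n := by
          ext i j
          exact or_comm
        rw [hswap]
        exact h
      · exact forward_aux ha hb hc hd hab hcd hgcd (Or.inr hao)
    · exact forward_aux ha hb hc hd hab hcd hgcd (Or.inl hno)
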